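/- Consider a weakly communicating average-reward MDP with optimal gain ρ* and optimal bias function h*. For any discount factor γ ∈ [0,1), the optimal value function V* of the γ-discounted MDP with the same transitions and rewards satisfies: (i) sp(V*) ≤ 2·sp(h*); (ii) for every state s, |V*(s) - ρ*/(1-γ)| ≤ sp(h*). -/
import Mathlib


open Finset

/-- Discounted approximation of a weakly communicating average-reward MDP
(Lemma 2 of Wei et al. 2020): if `(ρ, h)` solves the average-reward Bellman optimality
equation and `V` solves the `γ`-discounted Bellman optimality equation, then
(i) `sp(V) ≤ 2 sp(h)` and (ii) `|V(s) - ρ/(1-γ)| ≤ sp(h)` for all `s`. -/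
theorem stmt6 {S A : Type*} [Fintype S] [Fintype A] [Nonempty S] [Nonempty A]
    (P : S → A → S → ℝ) (r : S → A → ℝ)
    (hP0 : ∀ s a s', 0 ≤ P s a s') (hP1 : ∀ s a, ∑ s', P s a s' = 1)
    (hr0 : ∀ s a, 0 ≤ r s a) (hr1 : ∀ s a, r s a ≤ 1)
    (γ : ℝ) (hγ0 : 0 ≤ γ) (hγ1 : γ < 1)
    (ρ : ℝ) (h : S → ℝ)
    (hBellAvg : ∀ s, ρ + h s =
      univ.sup' univ_nonempty (fun a => r s a + ∑ s', P s a s' * h s'))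
    (V : S → ℝ)
    (hBellDisc : ∀ s, V s =
      univ.sup' univ_nonempty (fun a => r s a + γ * ∑ s', P s a s' * V s')) :
    (univ.sup' univ_nonempty V - univ.inf' univ_nonempty V
        ≤ 2 * (univ.sup' univ_nonempty h - univ.inf' univ_nonempty h)) ∧
    ∀ s, |V s - ρ / (1 - γ)| ≤
      univ.sup' univ_nonempty h - univ.inf' univ_nonempty h := by
  have hγ1' : (0:ℝ) < 1 - γ := by linarith
  set Hmax := univ.sup' univ_nonempty h with hHmax
  set Hmin := univ.inf' univ_nonempty h with hHmin
  set c := ρ / (1 - γ) with hc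
  have hcρ : (1 - γ) * c = ρ := by
    rw [hc]; field_simp
  have hsum_h_ge : ∀ s a, Hmin ≤ ∑ s', P s a s' * h s' := by
    intro s a
    calc Hmin = ∑ s', P s a s' * Hmin := by
          rw [← Finset.sum_mul, hP1, one_mul]
      _ ≤ ∑ s', P s a s' * h s' :=
          Finset.sum_le_sum (fun s' _ => mul_le_mul_of_nonneg_left
            (Finset.inf'_le _ (mem_univ s')) (hP0 s a s'))
  have hsum_h_le : ∀ s a, ∑ s', P s a s' * h s' ≤ Hmax := by
    intro s a
    calc ∑ s', P s a s' * h s' ≤ ∑ s', P s a s' * Hmax :=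
          Finset.sum_le_sum (fun s' _ => mul_le_mul_of_nonneg_left
            (Finset.le_sup' _ (mem_univ s')) (hP0 s a s'))
      _ = Hmax := by rw [← Finset.sum_mul, hP1, one_mul]
  -- Upper bound: V s ≤ h s + c - Hmin
  have upper : ∀ s, V s ≤ h s + c - Hmin := by
    set D := fun s => V s - (h s + c - Hmin) with hD
    set M := univ.sup' univ_nonempty D with hM
    suffices hM0 : M ≤ 0 by
      intro s
      have hle : D s ≤ M := Finset.le_sup' D (mem_univ s)
      simp only [hD] at hle
      linarith
    obtain ⟨s0, -, hs0⟩ := Finset.exists_mem_eq_sup' univ_nonempty D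
    obtain ⟨a0, -, ha0⟩ := Finset.exists_mem_eq_sup' (univ_nonempty (α := A))
      (fun a => r s0 a + γ * ∑ s', P s0 a s' * V s')
    have hVs0 : V s0 = r s0 a0 + γ * ∑ s', P s0 a0 s' * V s' := by
      rw [hBellDisc s0, ha0]
    have hAvg : r s0 a0 + ∑ s', P s0 a0 s' * h s' ≤ ρ + h s0 := by
      rw [hBellAvg s0]
      exact Finset.le_sup' (fun a => r s0 a + ∑ s', P s0 a s' * h s') (mem_univ a0)
    have hsumV : ∑ s', P s0 a0 s' * V s' ≤ (M + c - Hmin) + ∑ s', P s0 a0 s' * h s' := by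
      have step : ∀ s', V s' ≤ M + h s' + c - Hmin := by
        intro s'
        have hle : D s' ≤ M := Finset.le_sup' D (mem_univ s')
        simp only [hD] at hle
        linarith
      calc ∑ s', P s0 a0 s' * V s'
          ≤ ∑ s', P s0 a0 s' * (M + h s' + c - Hmin) :=
            Finset.sum_le_sum (fun s' _ => mul_le_mul_of_nonneg_left
              (step s') (hP0 s0 a0 s'))
        _ = (∑ s', P s0 a0 s') * (M + c - Hmin) + ∑ s', P s0 a0 s' * h s' := by
            rw [Finset.sum_mul, ← Finset.sum_add_distrib]
            exact Finset.sum_congr rfl (fun s' _ => by ring)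
        _ = (M + c - Hmin) + ∑ s', P s0 a0 s' * h s' := by
            rw [hP1, one_mul]
    have hMle : M ≤ γ * M := by
      have h1 : γ * ∑ s', P s0 a0 s' * V s'
          ≤ γ * ((M + c - Hmin) + ∑ s', P s0 a0 s' * h s') :=
        mul_le_mul_of_nonneg_left hsumV hγ0
      have h2 := hsum_h_ge s0 a0
      have hMeq : M = V s0 - (h s0 + c - Hmin) := hs0
      nlinarith [hVs0, hAvg]
    nlinarith
  -- Lower bound: h s + c - Hmax ≤ V s
  have lower : ∀ s, h s + c - Hmax ≤ V s := by
    set D := fun s => (h s + c - Hmax) - V s with hD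
    set M := univ.sup' univ_nonempty D with hM
    suffices hM0 : M ≤ 0 by
      intro s
      have hle : D s ≤ M := Finset.le_sup' D (mem_univ s)
      simp only [hD] at hle
      linarith
    obtain ⟨s0, -, hs0⟩ := Finset.exists_mem_eq_sup' univ_nonempty D
    obtain ⟨a0, -, ha0⟩ := Finset.exists_mem_eq_sup' (univ_nonempty (α := A))
      (fun a => r s0 a + ∑ s', P s0 a s' * h s')
    have hAvg : ρ + h s0 = r s0 a0 + ∑ s', P s0 a0 s' * h s' := by
      rw [hBellAvg s0, ha0]
    have hVs0 : r s0 a0 + γ * ∑ s', P s0 a0 s' * V s' ≤ V s0 := by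
      rw [hBellDisc s0]
      exact Finset.le_sup' (fun a => r s0 a + γ * ∑ s', P s0 a s' * V s') (mem_univ a0)
    have hsumV : (∑ s', P s0 a0 s' * h s') + (c - Hmax - M) ≤ ∑ s', P s0 a0 s' * V s' := by
      have step : ∀ s', h s' + c - Hmax - M ≤ V s' := by
        intro s'
        have hle : D s' ≤ M := Finset.le_sup' D (mem_univ s')
        simp only [hD] at hle
        linarith
      calc (∑ s', P s0 a0 s' * h s') + (c - Hmax - M)
          = (∑ s', P s0 a0 s' * h s') + (∑ s', P s0 a0 s') * (c - Hmax - M) := by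
            rw [hP1, one_mul]
        _ = ∑ s', P s0 a0 s' * (h s' + c - Hmax - M) := by
            rw [Finset.sum_mul, ← Finset.sum_add_distrib]
            exact Finset.sum_congr rfl (fun s' _ => by ring)
        _ ≤ ∑ s', P s0 a0 s' * V s' :=
            Finset.sum_le_sum (fun s' _ => mul_le_mul_of_nonneg_left
              (step s') (hP0 s0 a0 s'))
    have hMle : M ≤ γ * M := by
      have h1 : γ * ((∑ s', P s0 a0 s' * h s') + (c - Hmax - M))
          ≤ γ * ∑ s', P s0 a0 s' * V s' :=
        mul_le_mul_of_nonneg_left hsumV hγ0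
      have h2 := hsum_h_le s0 a0
      have hMeq : M = h s0 + c - Hmax - V s0 := hs0
      nlinarith [hVs0, hAvg]
    nlinarith
  have hsp : ∀ s, h s ≤ Hmax := fun s => Finset.le_sup' h (mem_univ s)
  have hsp' : ∀ s, Hmin ≤ h s := fun s => Finset.inf'_le h (mem_univ s)
  constructor
  · have h1 : univ.sup' univ_nonempty V ≤ Hmax + c - Hmin := by
      apply Finset.sup'_le
      intro s _
      have := upper s
      have := hsp s
      linarith
    have h2 : Hmin + c - Hmax ≤ univ.inf' univ_nonempty V := by
      apply Finset.le_inf'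
      intro s _
      have := lower s
      have := hsp' s
      linarith
    linarith
  · intro s
    rw [abs_le]
    constructor
    · have := lower s
      have := hsp' s
      linarith
    · have := upper s
      have := hsp s
      linarith
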